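/- Let C be an elastic tensor. For (l₁,l₂) in the open unit disk D = {(l₁,l₂) ∈ ℝ² : l₁² + l₂² < 1}, let l = (l₁, l₂, √(1 - l₁² - l₂²)), define m₀, n₀, m_φ, n_φ as above, and set S₁(l) = -(1/(2π)) ∫₀^{2π} T(n_φ)⁻¹ · R(m_φ, n_φ)ᵀ dφ and S₂(l) = (1/(2π)) ∫₀^{2π} T(n_φ)⁻¹ dφ. Then the maps (l₁,l₂) ↦ S₁(l) and (l₁,l₂) ↦ S₂(l) are real-analytic on D (entrywise). -/

import Mathlib

/-- The matrix `T(n)_{ik} = ∑_{j,l} C i j k l * n j * n l`. -/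
noncomputable def acousticT (C : Fin 3 → Fin 3 → Fin 3 → Fin 3 → ℝ)
    (n : EuclideanSpace ℝ (Fin 3)) : Matrix (Fin 3) (Fin 3) ℝ :=
  Matrix.of fun i k => ∑ j, ∑ l, C i j k l * n j * n l

/-- The matrix `R(m,n)_{ik} = ∑_{j,l} C i j k l * m j * n l`. -/
noncomputable def matR (C : Fin 3 → Fin 3 → Fin 3 → Fin 3 → ℝ)
    (m n : EuclideanSpace ℝ (Fin 3)) : Matrix (Fin 3) (Fin 3) ℝ :=
  Matrix.of fun i k => ∑ j, ∑ l, C i j k l * m j * n l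

/-- `m₀ = (1-l₁²)^{-1/2} (1-l₁², -l₁l₂, -l₁l₃)`. -/
noncomputable def mZero (l : EuclideanSpace ℝ (Fin 3)) : EuclideanSpace ℝ (Fin 3) :=
  (Real.sqrt (1 - (l 0) ^ 2))⁻¹ •
    (WithLp.equiv 2 (Fin 3 → ℝ)).symm ![1 - (l 0) ^ 2, -(l 0) * (l 1), -(l 0) * (l 2)]

/-- `n₀ = (1-l₁²)^{-1/2} (0, l₃, -l₂)`. -/
noncomputable def nZero (l : EuclideanSpace ℝ (Fin 3)) : EuclideanSpace ℝ (Fin 3) :=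
  (Real.sqrt (1 - (l 0) ^ 2))⁻¹ • (WithLp.equiv 2 (Fin 3 → ℝ)).symm ![0, l 2, -(l 1)]

/-- `m_φ = m₀ cos φ + n₀ sin φ`. -/
noncomputable def mPhi (l : EuclideanSpace ℝ (Fin 3)) (φ : ℝ) : EuclideanSpace ℝ (Fin 3) :=
  Real.cos φ • mZero l + Real.sin φ • nZero l

/-- `n_φ = -m₀ sin φ + n₀ cos φ`. -/
noncomputable def nPhi (l : EuclideanSpace ℝ (Fin 3)) (φ : ℝ) : EuclideanSpace ℝ (Fin 3) :=
  (-Real.sin φ) • mZero l + Real.cos φ • nZero l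

/-- `S₁(l) = -(1/(2π)) ∫₀^{2π} T(n_φ)⁻¹ R(m_φ,n_φ)ᵀ dφ` (entrywise integral). -/
noncomputable def SOne (C : Fin 3 → Fin 3 → Fin 3 → Fin 3 → ℝ)
    (l : EuclideanSpace ℝ (Fin 3)) : Matrix (Fin 3) (Fin 3) ℝ :=
  Matrix.of fun i k =>
    -(2 * Real.pi)⁻¹ * ∫ φ in (0:ℝ)..(2 * Real.pi),
      ((acousticT C (nPhi l φ))⁻¹ * (matR C (mPhi l φ) (nPhi l φ)).transpose) i k

/-- `S₂(l) = (1/(2π)) ∫₀^{2π} T(n_φ)⁻¹ dφ` (entrywise integral). -/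
noncomputable def STwo (C : Fin 3 → Fin 3 → Fin 3 → Fin 3 → ℝ)
    (l : EuclideanSpace ℝ (Fin 3)) : Matrix (Fin 3) (Fin 3) ℝ :=
  Matrix.of fun i k =>
    (2 * Real.pi)⁻¹ * ∫ φ in (0:ℝ)..(2 * Real.pi), (acousticT C (nPhi l φ))⁻¹ i k

/-- The unit vector `l = (l₁, l₂, √(1-l₁²-l₂²))` parametrized by the unit disk. -/
noncomputable def lVec (p : ℝ × ℝ) : EuclideanSpace ℝ (Fin 3) :=
  (WithLp.equiv 2 (Fin 3 → ℝ)).symm ![p.1, p.2, Real.sqrt (1 - p.1 ^ 2 - p.2 ^ 2)]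


open Real in
lemma analyticAt_ccos (z : ℂ) : AnalyticAt ℂ Complex.cos z := by
  have : Complex.cos = fun z => (Complex.exp (z * Complex.I) + Complex.exp (-z * Complex.I)) / 2 := by
    funext w; simp [Complex.cos, mul_comm]
  rw [this]
  exact (((analyticAt_id.mul analyticAt_const).cexp).add
    ((analyticAt_id.neg.mul analyticAt_const).cexp)).div analyticAt_const two_ne_zero
lemma analyticAt_csin (z : ℂ) : AnalyticAt ℂ Complex.sin z := by
  have : Complex.sin = fun z => (Complex.exp (-z * Complex.I) - Complex.exp (z * Complex.I)) * Complex.I / 2 := by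
    funext w; simp [Complex.sin]
  rw [this]
  exact ((((analyticAt_id.neg.mul analyticAt_const).cexp).sub
    ((analyticAt_id.mul analyticAt_const).cexp)).mul analyticAt_const).div analyticAt_const two_ne_zero
lemma analyticAt_rcos (x : ℝ) : AnalyticAt ℝ Real.cos x := by
  have : Real.cos = fun x : ℝ => Complex.reCLM (Complex.cos (Complex.ofRealCLM x)) := by
    funext y; simp [Real.cos]
  rw [this]
  exact (Complex.reCLM.analyticAt _).comp
    (((analyticAt_ccos _).restrictScalars).comp (Complex.ofRealCLM.analyticAt _))
lemma analyticAt_rsin (x : ℝ) : AnalyticAt ℝ Real.sin x := by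
  have : Real.sin = fun x : ℝ => Complex.reCLM (Complex.sin (Complex.ofRealCLM x)) := by
    funext y; simp [Real.sin]
  rw [this]
  exact (Complex.reCLM.analyticAt _).comp
    (((analyticAt_csin _).restrictScalars).comp (Complex.ofRealCLM.analyticAt _))
lemma analyticAt_rlog {x : ℝ} (hx : 0 < x) : AnalyticAt ℝ Real.log x := by
  have h : ∀ᶠ y in nhds x, Real.log y = Complex.reCLM (Complex.log (Complex.ofRealCLM y)) := by
    filter_upwards [eventually_gt_nhds hx] with y hy
    rw [Complex.ofRealCLM_apply, ← Complex.log_ofReal_re]; rfl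
  have : AnalyticAt ℝ (fun y : ℝ => Complex.reCLM (Complex.log (Complex.ofRealCLM y))) x :=
    (Complex.reCLM.analyticAt _).comp
      ((((analyticAt_clog (by simp [Complex.mem_slitPlane_iff, hx])).restrictScalars).comp
        (Complex.ofRealCLM.analyticAt _)))
  exact this.congr (by filter_upwards [h] with y hy using hy.symm)
lemma analyticAt_rsqrt {x : ℝ} (hx : 0 < x) : AnalyticAt ℝ Real.sqrt x := by
  have h : ∀ᶠ y in nhds x, Real.sqrt y = Real.exp (Real.log y / 2) := by
    filter_upwards [eventually_gt_nhds hx] with y hy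
    rw [Real.sqrt_eq_rpow, Real.rpow_def_of_pos hy]
    ring_nf
  have : AnalyticAt ℝ (fun y => Real.exp (Real.log y / 2)) x :=
    (((analyticAt_rlog hx).div analyticAt_const two_ne_zero)).rexp
  exact this.congr (by filter_upwards [h] with y hy using hy.symm)

open MeasureTheory Set
open scoped ENNReal NNReal

noncomputable abbrev sliceL : (ℝ × ℝ) →L[ℝ] (ℝ × ℝ) × ℝ := ContinuousLinearMap.inl ℝ (ℝ × ℝ) ℝ

lemma norm_sliceL_apply (y : ℝ × ℝ) : ‖sliceL y‖ = ‖y‖ := by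
  simp [Prod.norm_def]

/-- Slice of a joint power series. -/
lemma hasFPowerSeriesOnBall_slice {g : (ℝ × ℝ) × ℝ → ℝ} {P : FormalMultilinearSeries ℝ ((ℝ × ℝ) × ℝ) ℝ}
    {p₀ : ℝ × ℝ} {t : ℝ} {r : ℝ≥0∞} (hP : HasFPowerSeriesOnBall g P (p₀, t) r) :
    HasFPowerSeriesOnBall (fun p => g (p, t)) (P.compContinuousLinearMap sliceL) p₀ r := by
  constructor
  · refine le_trans hP.r_le (FormalMultilinearSeries.radius_le_of_le fun n => ?_)
    calc ‖P.compContinuousLinearMap sliceL n‖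
        ≤ ‖P n‖ * ∏ _i : Fin n, ‖sliceL‖ :=
          ContinuousMultilinearMap.norm_compContinuousLinearMap_le _ _
      _ ≤ ‖P n‖ * 1 := by
          have h1 : ∏ _i : Fin n, ‖sliceL‖ ≤ 1 :=
            Finset.prod_le_one (fun _ _ => norm_nonneg _) (fun _ _ =>
              ContinuousLinearMap.opNorm_le_bound _ zero_le_one
                (fun y => by rw [norm_sliceL_apply, one_mul]))
          exact mul_le_mul_of_nonneg_left h1 (norm_nonneg _)
      _ = ‖P n‖ := mul_one _
  · exact hP.r_pos
  · intro y hy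
    have hy' : sliceL y ∈ Metric.eball (0 : (ℝ × ℝ) × ℝ) r := by
      rw [mem_emetric_ball_zero_iff, enorm_eq_nnnorm] at hy ⊢
      have : ‖sliceL y‖₊ = ‖y‖₊ := by
        ext; exact norm_sliceL_apply y
      rw [this]; exact hy
    have := hP.hasSum hy'
    simp only [FormalMultilinearSeries.compContinuousLinearMap_apply]
    convert this using 2
    show ((p₀ + y, t) : (ℝ × ℝ) × ℝ) = (p₀, t) + sliceL y
    show ((p₀ + y, t) : (ℝ × ℝ) × ℝ) = (p₀, t) + (y, 0)
    simp [Prod.ext_iff]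
    rfl

/-- Uniform bound on the coefficients of `changeOrigin` series. -/
lemma changeOrigin_uniform_bound {G : Type*} [NormedAddCommGroup G] [NormedSpace ℝ G]
    {P : FormalMultilinearSeries ℝ G ℝ} {δ : ℝ≥0}
    (hδ : ((δ : ℝ≥0∞) + δ) < P.radius) :
    ∃ C : ℝ≥0, ∀ x : G, ‖x‖₊ ≤ δ → ∀ k, ‖P.changeOrigin x k‖₊ * δ ^ k ≤ C := by
  have hδrad : (δ : ℝ≥0∞) < P.radius := lt_of_le_of_lt le_self_add hδ
  set S : ℕ → ℝ≥0 := fun k =>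
    ∑' s : Σ l : ℕ, { s : Finset (Fin (k + l)) // s.card = l }, ‖P (k + s.1)‖₊ * δ ^ s.1 with hS
  have haux₂ : ∀ k, Summable fun s : Σ l : ℕ, { s : Finset (Fin (k + l)) // s.card = l } =>
      ‖P (k + s.1)‖₊ * δ ^ s.1 := fun k => P.changeOriginSeries_summable_aux₂ hδrad k
  have hstep1 : ∀ x : G, ‖x‖₊ ≤ δ → ∀ k, ‖P.changeOrigin x k‖₊ ≤ S k := by
    intro x hx k
    refine (P.nnnorm_changeOrigin_le k (lt_of_le_of_lt (ENNReal.coe_le_coe.2 hx) hδrad)).trans ?_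
    refine Summable.tsum_le_tsum (fun s => ?_) ?_ (haux₂ k)
    · exact mul_le_mul' le_rfl (pow_le_pow_left' hx _)
    · exact NNReal.summable_of_le (fun s => mul_le_mul' le_rfl (pow_le_pow_left' hx _)) (haux₂ k)
  have hsum : Summable fun k => S k * δ ^ k := by
    have h' : ((δ : ℝ≥0) + δ : ℝ≥0∞) < P.radius := by push_cast at hδ ⊢; exact hδ
    have := (NNReal.summable_sigma.1 (P.changeOriginSeries_summable_aux₁ h')).2
    refine this.congr fun k => ?_
    simp only [hS]
    rw [NNReal.tsum_mul_right]
  refine ⟨∑' k, S k * δ ^ k, fun x hx k => ?_⟩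
  exact le_trans (mul_le_mul' (hstep1 x hx k) le_rfl) (hsum.le_tsum' k)

/-- Core lemma: analyticity of a parametric integral over a short interval
covered by a single power series ball. -/
lemma analyticAt_integral_core {g : (ℝ × ℝ) × ℝ → ℝ} {p₀ : ℝ × ℝ} {t₀ a b : ℝ}
    {P : FormalMultilinearSeries ℝ ((ℝ × ℝ) × ℝ) ℝ} {ρ : ℝ≥0∞} {δ : ℝ≥0}
    (hP : HasFPowerSeriesOnBall g P (p₀, t₀) ρ) (hδ0 : 0 < δ)
    (hδρ : ((δ : ℝ≥0∞) + δ + δ) < ρ)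
    (hab : ∀ t ∈ Set.Icc a b, dist t t₀ < (δ : ℝ)) (hab' : a ≤ b) :
    AnalyticAt ℝ (fun p => ∫ t in a..b, g (p, t)) p₀ := by
  classical
  have hδρ' : (δ : ℝ≥0∞) < ρ := lt_of_le_of_lt (by simp [le_add_right]) hδρ
  have hradP : ((δ : ℝ≥0∞) + δ) < P.radius :=
    lt_of_lt_of_le (lt_of_le_of_lt (by simp [add_le_add]) hδρ) hP.r_le
  -- the offset vector
  set x : ℝ → (ℝ × ℝ) × ℝ := fun t => ((0 : ℝ × ℝ), t - t₀) with hxdef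
  have hxnn : ∀ t, ‖x t‖₊ = ‖t - t₀‖₊ := by
    intro t
    ext
    simp [hxdef, Prod.norm_def]
  have hxle : ∀ t ∈ Set.Icc a b, ‖x t‖₊ ≤ δ := by
    intro t ht
    rw [hxnn]
    have := (hab t ht).le
    rw [Real.dist_eq] at this
    exact NNReal.coe_le_coe.1 (by simpa [nnnorm, Real.norm_eq_abs] using this)
  -- the sliced series
  set q : ℝ → FormalMultilinearSeries ℝ (ℝ × ℝ) ℝ :=
    fun t => (P.changeOrigin (x t)).compContinuousLinearMap sliceL with hqdef
  -- claim 1: power series for slices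
  have h1 : ∀ t ∈ Set.Icc a b, HasFPowerSeriesOnBall (fun p => g (p, t)) (q t) p₀ δ := by
    intro t ht
    have hx1 : (‖x t‖₊ : ℝ≥0∞) < ρ := lt_of_le_of_lt (ENNReal.coe_le_coe.2 (hxle t ht)) hδρ'
    have hco := hP.changeOrigin hx1
    have heq : ((p₀, t₀) : (ℝ × ℝ) × ℝ) + x t = (p₀, t) := by
      simp [hxdef, Prod.ext_iff]
    rw [heq] at hco
    have hmono : (δ : ℝ≥0∞) ≤ ρ - ‖x t‖₊ := by
      refine ENNReal.le_sub_of_add_le_right (by simp) ?_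
      calc (δ : ℝ≥0∞) + ‖x t‖₊ ≤ (δ : ℝ≥0∞) + δ := by
            exact add_le_add le_rfl (ENNReal.coe_le_coe.2 (hxle t ht))
        _ ≤ (δ : ℝ≥0∞) + δ + δ := le_self_add
        _ ≤ ρ := hδρ.le
    exact hasFPowerSeriesOnBall_slice (hco.mono (by exact_mod_cast hδ0) hmono)
  -- claim 2: uniform coefficient bounds
  obtain ⟨C, hC⟩ := changeOrigin_uniform_bound hradP
  have h2 : ∀ t ∈ Set.Icc a b, ∀ n, ‖q t n‖₊ * δ ^ n ≤ C := by
    intro t ht n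
    refine le_trans (mul_le_mul' ?_ le_rfl) (hC (x t) (hxle t ht) n)
    have := ContinuousMultilinearMap.norm_compContinuousLinearMap_le
      (P.changeOrigin (x t) n) (fun _ : Fin n => sliceL)
    have h1' : ∏ _i : Fin n, ‖sliceL‖ ≤ 1 :=
      Finset.prod_le_one (fun _ _ => norm_nonneg _) (fun _ _ =>
        ContinuousLinearMap.opNorm_le_bound _ zero_le_one
          (fun y => by rw [norm_sliceL_apply, one_mul]))
    have : ‖q t n‖ ≤ ‖P.changeOrigin (x t) n‖ := by
      refine le_trans this ?_
      calc ‖P.changeOrigin (x t) n‖ * ∏ _i : Fin n, ‖sliceL‖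
          ≤ ‖P.changeOrigin (x t) n‖ * 1 := mul_le_mul_of_nonneg_left h1' (norm_nonneg _)
        _ = _ := mul_one _
    exact this
  -- claim 3: continuity of coefficients
  have h3 : ∀ n, ContinuousOn (fun t => q t n) (Set.Icc a b) := by
    intro n
    have hradpos : 0 < P.radius := lt_of_lt_of_le hP.r_pos hP.r_le
    have hco := (P.hasFPowerSeriesOnBall_changeOrigin n hradpos).continuousOn
    have hmap : Set.MapsTo x (Set.Icc a b) (Metric.eball (0 : (ℝ × ℝ) × ℝ) P.radius) := by
      intro t ht
      rw [mem_emetric_ball_zero_iff, enorm_eq_nnnorm]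
      exact lt_of_le_of_lt (ENNReal.coe_le_coe.2 (hxle t ht))
        (lt_of_lt_of_le hδρ' hP.r_le)
    have hxcont : ContinuousOn x (Set.Icc a b) := by
      apply Continuous.continuousOn
      exact (continuous_const.prodMk (continuous_id.sub continuous_const))
    have hinner : ContinuousOn (fun t => P.changeOrigin (x t) n) (Set.Icc a b) := by
      rw [show (fun t => P.changeOrigin (x t) n) = (fun z => P.changeOrigin z n) ∘ x from rfl]
      exact hco.comp hxcont hmap
    have houter := (ContinuousMultilinearMap.compContinuousLinearMapL (F := ℝ)
      (fun _ : Fin n => sliceL)).continuous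
    have : (fun t => q t n) = (fun A => ContinuousMultilinearMap.compContinuousLinearMapL (F := ℝ)
        (fun _ : Fin n => sliceL) A) ∘ (fun t => P.changeOrigin (x t) n) := by
      funext t
      simp [hqdef, FormalMultilinearSeries.compContinuousLinearMap]
    rw [this]
    exact houter.comp_continuousOn hinner
  -- integrability of coefficients
  have h4 : ∀ n, IntegrableOn (fun t => q t n) (Set.Ioc a b) volume := by
    intro n
    exact ((h3 n).integrableOn_Icc).mono_set Set.Ioc_subset_Icc_self
  -- the candidate series
  set Q : FormalMultilinearSeries ℝ (ℝ × ℝ) ℝ :=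
    fun n => ∫ t in Set.Ioc a b, q t n with hQdef
  have hIocIcc : Set.Ioc a b ⊆ Set.Icc a b := Set.Ioc_subset_Icc_self
  have hδR : (0:ℝ) < δ := hδ0
  -- pointwise norm bound
  have hptw : ∀ n, ∀ t ∈ Set.Ioc a b, ‖q t n‖ ≤ (C : ℝ) / (δ:ℝ) ^ n := by
    intro n t ht
    have h2' := h2 t (hIocIcc ht) n
    have : ‖q t n‖ * (δ:ℝ) ^ n ≤ (C : ℝ) := by exact_mod_cast h2'
    rw [le_div_iff₀ (by positivity)]
    exact this
  have hvol : volume (Set.Ioc a b) < ⊤ := by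
    rw [Real.volume_Ioc]; exact ENNReal.ofReal_lt_top
  have hQnorm : ∀ n, ‖Q n‖ ≤ ((C : ℝ) / (δ:ℝ) ^ n) * (b - a) := by
    intro n
    have := MeasureTheory.norm_setIntegral_le_of_norm_le_const hvol
      (fun t ht => hptw n t ht)
    calc ‖Q n‖ ≤ (C : ℝ) / (δ:ℝ) ^ n * (volume (Set.Ioc a b)).toReal := this
      _ ≤ (C : ℝ) / (δ:ℝ) ^ n * (b - a) := by
          rw [Real.volume_Ioc, ENNReal.toReal_ofReal (by linarith : (0:ℝ) ≤ b - a)]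
  have hball : HasFPowerSeriesOnBall (fun p => ∫ t in Set.Ioc a b, g (p, t)) Q p₀ δ := by
    constructor
    · refine Q.le_radius_of_bound ((C : ℝ) * (b - a)) (fun n => ?_)
      calc ‖Q n‖ * (δ:ℝ) ^ n ≤ ((C : ℝ) / (δ:ℝ) ^ n * (b - a)) * (δ:ℝ) ^ n := by
            exact mul_le_mul_of_nonneg_right (hQnorm n) (by positivity)
        _ = (C : ℝ) * (b - a) := by field_simp
    · exact_mod_cast hδ0
    · intro y hy
      rw [mem_emetric_ball_zero_iff] at hy
      have hynorm : ‖y‖ < (δ:ℝ) := by exact_mod_cast hy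
      -- the summands
      set f : ℕ → ℝ → ℝ := fun n t => q t n (fun _ => y) with hfdef
      have hInt : ∀ n, Integrable (f n) (volume.restrict (Set.Ioc a b)) := by
        intro n
        have hcont : ContinuousOn (f n) (Set.Icc a b) :=
          (ContinuousMultilinearMap.apply ℝ (fun _ : Fin n => ℝ × ℝ) ℝ
            (fun _ => y)).continuous.comp_continuousOn (h3 n)
        exact (hcont.integrableOn_Icc).mono_set hIocIcc
      have hfb : ∀ n, ∀ t ∈ Set.Ioc a b, ‖f n t‖ ≤ (C : ℝ) * (‖y‖ / (δ:ℝ)) ^ n := by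
        intro n t ht
        calc ‖f n t‖ ≤ ‖q t n‖ * ∏ _i : Fin n, ‖y‖ :=
              (q t n).le_opNorm _
          _ = ‖q t n‖ * ‖y‖ ^ n := by rw [Finset.prod_const, Finset.card_univ, Fintype.card_fin]
          _ ≤ ((C : ℝ) / (δ:ℝ) ^ n) * ‖y‖ ^ n :=
              mul_le_mul_of_nonneg_right (hptw n t ht) (by positivity)
          _ = (C : ℝ) * (‖y‖ / (δ:ℝ)) ^ n := by
              rw [div_pow]; ring
      have hsumnorm : Summable fun n => ∫ t in Set.Ioc a b, ‖f n t‖ := by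
        have hgeo : Summable fun n : ℕ => ((C : ℝ) * (‖y‖ / (δ:ℝ)) ^ n) * (b - a) := by
          apply Summable.mul_right
          apply Summable.mul_left
          apply summable_geometric_of_lt_one (by positivity)
          rw [div_lt_one hδR]
          exact hynorm
        refine Summable.of_nonneg_of_le (fun n => ?_) (fun n => ?_) hgeo
        · exact MeasureTheory.integral_nonneg (fun t => norm_nonneg _)
        · have hmono := MeasureTheory.setIntegral_mono_on ((hInt n).norm)
            (MeasureTheory.integrableOn_const hvol.ne) measurableSet_Ioc
            (fun t ht => hfb n t ht)
          refine hmono.trans ?_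
          rw [MeasureTheory.setIntegral_const, measureReal_def, Real.volume_Ioc, smul_eq_mul,
            ENNReal.toReal_ofReal (by linarith : (0:ℝ) ≤ b - a)]
          rw [mul_comm]
      have hswap := MeasureTheory.hasSum_integral_of_summable_integral_norm
        (F := f) (μ := volume.restrict (Set.Ioc a b)) hInt hsumnorm
      -- identify the sum inside the integral
      have hid : ∀ t ∈ Set.Ioc a b, (∑' n, f n t) = g (p₀ + y, t) := by
        intro t ht
        have := (h1 t (hIocIcc ht)).hasSum (by rw [mem_emetric_ball_zero_iff]; exact hy)
        exact this.tsum_eq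
      have hconv : (∫ t in Set.Ioc a b, (∑' n, f n t)) = ∫ t in Set.Ioc a b, g (p₀ + y, t) := by
        refine MeasureTheory.setIntegral_congr_fun measurableSet_Ioc (fun t ht => hid t ht)
      rw [hconv] at hswap
      -- identify the terms
      have hterm : ∀ n, (∫ t in Set.Ioc a b, f n t) = Q n (fun _ => y) := by
        intro n
        have := (ContinuousMultilinearMap.apply ℝ (fun _ : Fin n => ℝ × ℝ) ℝ
          (fun _ => y)).integral_comp_comm (h4 n)
        rw [show (∫ t in Set.Ioc a b, f n t) = ∫ t in Set.Ioc a b,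
          (ContinuousMultilinearMap.apply ℝ (fun _ : Fin n => ℝ × ℝ) ℝ (fun _ => y)) (q t n)
          from rfl]
        exact this
      have heq2 : (fun n => Q n (fun _ => y)) = fun n => ∫ t in Set.Ioc a b, f n t := by
        funext n; exact (hterm n).symm
      rw [heq2]
      exact hswap
  have hfun : (fun p => ∫ t in a..b, g (p, t)) =
      (fun p => ∫ t in Set.Ioc a b, g (p, t)) := by
    funext p
    rw [intervalIntegral.integral_of_le hab']
  rw [hfun]
  exact hball.analyticAt

/-- Main lemma: a parametric integral of a jointly analytic function is analytic. -/
lemma analyticAt_intervalIntegral {g : (ℝ × ℝ) × ℝ → ℝ} {p₀ : ℝ × ℝ}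
    (hg : ∀ t : ℝ, AnalyticAt ℝ g (p₀, t)) :
    AnalyticAt ℝ (fun p => ∫ t in (0:ℝ)..(2 * Real.pi), g (p, t)) p₀ := by
  classical
  have hπ : (0:ℝ) < 2 * Real.pi := by positivity
  -- extract balls with controlled radii
  have hex : ∀ s : ℝ, ∃ (P : FormalMultilinearSeries ℝ ((ℝ × ℝ) × ℝ) ℝ) (ρ : ℝ≥0∞) (δ : ℝ≥0),
      0 < δ ∧ ((δ : ℝ≥0∞) + δ + δ) < ρ ∧ HasFPowerSeriesOnBall g P (p₀, s) ρ := by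
    intro s
    obtain ⟨P, hP⟩ := hg s
    obtain ⟨r, hr⟩ := hP
    obtain ⟨c, hc0, hcr⟩ := ENNReal.lt_iff_exists_nnreal_btwn.1 hr.r_pos
    have hc0' : 0 < c := by exact_mod_cast hc0
    refine ⟨P, r, c / 3, by positivity, ?_, hr⟩
    have h3 : ((c / 3 : ℝ≥0) : ℝ≥0∞) + (c / 3 : ℝ≥0) + (c / 3 : ℝ≥0) = (c : ℝ≥0∞) := by
      rw [← ENNReal.coe_add, ← ENNReal.coe_add]
      norm_cast
      field_simp
      ring
    rw [h3]
    exact hcr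
  choose P ρ δ hδ0 hδρ hP using hex
  -- Lebesgue number for the cover by balls
  have hK : IsCompact (Set.Icc (0:ℝ) (2 * Real.pi)) := isCompact_Icc
  have hcover : Set.Icc (0:ℝ) (2 * Real.pi) ⊆ ⋃ s : ℝ, Metric.ball s ((δ s : ℝ)) := by
    intro t _
    exact Set.mem_iUnion.2 ⟨t, by simp [Metric.mem_ball]; exact_mod_cast hδ0 t⟩
  obtain ⟨ε, hε0, hleb⟩ := lebesgue_number_lemma_of_metric hK (fun s => Metric.isOpen_ball) hcover
  -- uniform partition
  obtain ⟨N, hN⟩ := exists_nat_gt (2 * Real.pi / ε)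
  have hN0 : 0 < N := by
    rcases Nat.eq_zero_or_pos N with h | h
    · subst h
      simp only [Nat.cast_zero] at hN
      have : (0:ℝ) < 2 * Real.pi / ε := by positivity
      linarith
    · exact h
  have hNR : (0:ℝ) < N := by exact_mod_cast hN0
  set A : ℕ → ℝ := fun i => 2 * Real.pi * i / N with hA
  have hA0 : A 0 = 0 := by simp [hA]
  have hAN : A N = 2 * Real.pi := by
    rw [hA]; field_simp [hNR.ne']
  have hAmono : ∀ i : ℕ, A i ≤ A (i + 1) := by
    intro i
    simp only [hA]
    gcongr
    push_cast
    linarith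
  have hstep : ∀ i : ℕ, A (i + 1) - A i = 2 * Real.pi / N := by
    intro i
    simp only [hA]
    push_cast
    field_simp
    ring
  have hstepε : 2 * Real.pi / N < ε := by
    rw [div_lt_iff₀ hNR]
    rw [div_lt_iff₀ hε0] at hN
    linarith [mul_comm ε (N:ℝ)]
  have hArange : ∀ i : ℕ, i ≤ N → A i ∈ Set.Icc (0:ℝ) (2 * Real.pi) := by
    intro i hi
    constructor
    · simp only [hA]; positivity
    · simp only [hA]
      rw [div_le_iff₀ hNR]
      have : (i:ℝ) ≤ (N:ℝ) := by exact_mod_cast hi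
      nlinarith [Real.pi_pos]
  -- each piece is analytic
  have hpiece : ∀ i : ℕ, i < N →
      AnalyticAt ℝ (fun p => ∫ t in (A i)..(A (i + 1)), g (p, t)) p₀ := by
    intro i hi
    obtain ⟨s, hs⟩ := hleb (A i) (hArange i hi.le)
    have hsub : ∀ t ∈ Set.Icc (A i) (A (i + 1)), dist t s < (δ s : ℝ) := by
      intro t ht
      have htball : t ∈ Metric.ball (A i) ε := by
        rw [Metric.mem_ball, Real.dist_eq, abs_sub_lt_iff]
        constructor
        · have := ht.2
          have h2 := hstep i
          linarith [hstepε]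
        · linarith [ht.1]
      have := hs htball
      rwa [Metric.mem_ball] at this
    exact analyticAt_integral_core (hP s) (hδ0 s) (hδρ s) hsub (hAmono i)
  -- the sum of pieces is analytic
  have hsum : AnalyticAt ℝ
      (fun p => ∑ i ∈ Finset.range N, ∫ t in (A i)..(A (i + 1)), g (p, t)) p₀ := by
    apply Finset.analyticAt_fun_sum
    intro i hi
    exact hpiece i (Finset.mem_range.1 hi)
  -- locally, the full integral equals the sum of the pieces
  -- tube lemma for joint continuity
  have hopen : IsOpen {z : (ℝ × ℝ) × ℝ | AnalyticAt ℝ g z} := isOpen_analyticAt ℝ g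
  have htube : ∃ u : Set (ℝ × ℝ), IsOpen u ∧ p₀ ∈ u ∧
      ∀ p ∈ u, ∀ t ∈ Set.Icc (0:ℝ) (2 * Real.pi), AnalyticAt ℝ g (p, t) := by
    have hsubset : {p₀} ×ˢ Set.Icc (0:ℝ) (2 * Real.pi) ⊆ {z : (ℝ × ℝ) × ℝ | AnalyticAt ℝ g z} := by
      rintro ⟨p, t⟩ ⟨hp, ht⟩
      rcases hp with rfl
      exact hg t
    obtain ⟨u, v, hu, hv, hpu, hKv, huv⟩ := generalized_tube_lemma isCompact_singleton hK
      hopen hsubset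
    exact ⟨u, hu, hpu rfl, fun p hp t ht => huv ⟨hp, hKv ht⟩⟩
  obtain ⟨u, huopen, hup₀, hu⟩ := htube
  have heqev : (fun p => ∑ i ∈ Finset.range N, ∫ t in (A i)..(A (i + 1)), g (p, t))
      =ᶠ[nhds p₀] (fun p => ∫ t in (0:ℝ)..(2 * Real.pi), g (p, t)) := by
    filter_upwards [huopen.mem_nhds hup₀] with p hp
    have hint : ∀ k : ℕ, k < N → IntervalIntegrable (fun t => g (p, t)) volume (A k) (A (k + 1)) := by
      intro k hk
      apply ContinuousOn.intervalIntegrable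
      intro t ht
      rw [Set.uIcc_of_le (hAmono k)] at ht
      have htK : t ∈ Set.Icc (0:ℝ) (2 * Real.pi) := by
        constructor
        · exact le_trans (hArange k hk.le).1 ht.1
        · exact le_trans ht.2 (hArange (k + 1) hk).2
      have := (hu p hp t htK).continuousAt.comp
        ((Continuous.prodMk continuous_const continuous_id).continuousAt (x := t))
      exact this.continuousWithinAt
    have := intervalIntegral.sum_integral_adjacent_intervals (f := fun t => g (p, t))
      (μ := volume) (a := A) (n := N) (fun k hk => hint k hk)
    rw [hA0, hAN] at this
    exact this
  exact hsum.congr heqev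

lemma acousticT_det_ne_zero (C : Fin 3 → Fin 3 → Fin 3 → Fin 3 → ℝ)
    (hsym1 : ∀ i j k l, C i j k l = C i j l k)
    (hsym2 : ∀ i j k l, C i j k l = C k l i j)
    (hconv : ∃ lam : ℝ, 0 < lam ∧ ∀ ε : Matrix (Fin 3) (Fin 3) ℝ, ε.IsSymm →
      lam * ∑ i, ∑ j, (ε i j) ^ 2 ≤ ∑ i, ∑ j, ∑ k, ∑ l, C i j k l * ε i j * ε k l)
    (n : EuclideanSpace ℝ (Fin 3)) (hn : ∑ j, (n j) ^ 2 = 1) :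
    (acousticT C n).det ≠ 0 := by
  classical
  obtain ⟨lam, hlam, hconv⟩ := hconv
  have hsym1' : ∀ i j k l, C i j k l = C j i k l := by
    intro i j k l
    rw [hsym2 i j k l, hsym1 k l i j, hsym2 k l j i]
  intro hdet
  obtain ⟨v, hv0, hvmul⟩ := Matrix.exists_mulVec_eq_zero_iff.2 hdet
  set ε : Matrix (Fin 3) (Fin 3) ℝ := Matrix.of fun i j => v i * n j + n i * v j with hε
  have hεsymm : ε.IsSymm := by
    ext i j
    simp [hε, Matrix.transpose_apply]
    ring
  -- swap lemmas
  have hswap2 : ∀ (w : Fin 3 → Fin 3 → ℝ) (i j : Fin 3),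
      (∑ k, ∑ l, C i j k l * w i j * (n k * v l)) =
        ∑ k, ∑ l, C i j k l * w i j * (v k * n l) := by
    intro w i j
    rw [Finset.sum_comm]
    refine Finset.sum_congr rfl fun k _ => Finset.sum_congr rfl fun l _ => ?_
    rw [← hsym1 i j k l]
    ring
  have hswap1 : ∀ (w : Fin 3 → Fin 3 → ℝ),
      (∑ i, ∑ j, ∑ k, ∑ l, C i j k l * (n i * v j) * w k l) =
        ∑ i, ∑ j, ∑ k, ∑ l, C i j k l * (v i * n j) * w k l := by
    intro w
    rw [Finset.sum_comm]
    refine Finset.sum_congr rfl fun i _ => Finset.sum_congr rfl fun j _ => ?_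
    refine Finset.sum_congr rfl fun k _ => Finset.sum_congr rfl fun l _ => ?_
    rw [← hsym1' j i k l]
    ring
  -- A = quadratic form value
  have hA0 : (∑ i, ∑ j, ∑ k, ∑ l, C i j k l * (v i * n j) * (v k * n l)) = 0 := by
    have hA : (∑ i, ∑ j, ∑ k, ∑ l, C i j k l * (v i * n j) * (v k * n l)) =
        ∑ i, v i * ((acousticT C n).mulVec v i) := by
      simp only [Matrix.mulVec, dotProduct, acousticT, Matrix.of_apply,
        Finset.mul_sum, Finset.sum_mul]
      refine Finset.sum_congr rfl fun i _ => ?_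
      rw [Finset.sum_comm]
      refine Finset.sum_congr rfl fun k _ => Finset.sum_congr rfl fun j _ => ?_
      refine Finset.sum_congr rfl fun l _ => ?_
      ring
    rw [hA, hvmul]
    simp
  -- expansion of B(ε,ε)
  have hexp : (∑ i, ∑ j, ∑ k, ∑ l, C i j k l * ε i j * ε k l) = 0 := by
    have h1 : (∑ i, ∑ j, ∑ k, ∑ l, C i j k l * ε i j * ε k l) =
        (∑ i, ∑ j, ∑ k, ∑ l, C i j k l * (v i * n j) * (v k * n l)) +
        (∑ i, ∑ j, ∑ k, ∑ l, C i j k l * (v i * n j) * (n k * v l)) +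
        ((∑ i, ∑ j, ∑ k, ∑ l, C i j k l * (n i * v j) * (v k * n l)) +
        (∑ i, ∑ j, ∑ k, ∑ l, C i j k l * (n i * v j) * (n k * v l))) := by
      simp only [hε, Matrix.of_apply, mul_add, add_mul, Finset.sum_add_distrib]
      ring
    rw [h1]
    have e2 : (∑ i, ∑ j, ∑ k, ∑ l, C i j k l * (v i * n j) * (n k * v l)) =
        ∑ i, ∑ j, ∑ k, ∑ l, C i j k l * (v i * n j) * (v k * n l) :=
      Finset.sum_congr rfl fun i _ => Finset.sum_congr rfl fun j _ =>
        hswap2 (fun i j => v i * n j) i j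
    have e4 : (∑ i, ∑ j, ∑ k, ∑ l, C i j k l * (n i * v j) * (n k * v l)) =
        ∑ i, ∑ j, ∑ k, ∑ l, C i j k l * (n i * v j) * (v k * n l) :=
      Finset.sum_congr rfl fun i _ => Finset.sum_congr rfl fun j _ =>
        hswap2 (fun i j => n i * v j) i j
    have e3 := hswap1 (fun k l => v k * n l)
    rw [e2, e4, e3, hA0]
    ring
  -- conclude ε = 0
  have hle := hconv ε hεsymm
  rw [hexp] at hle
  have hsq : (∑ i, ∑ j, (ε i j) ^ 2) = 0 := by
    have hnn : 0 ≤ ∑ i, ∑ j, (ε i j) ^ 2 :=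
      Finset.sum_nonneg fun i _ => Finset.sum_nonneg fun j _ => sq_nonneg _
    nlinarith
  have hvn : ∀ i j, v i * n j + n i * v j = 0 := by
    intro i j
    have h1 : ∀ i ∈ Finset.univ, ∀ j ∈ (Finset.univ : Finset (Fin 3)), (ε i j) ^ 2 = 0 := by
      have := (Finset.sum_eq_zero_iff_of_nonneg
        (fun i _ => Finset.sum_nonneg fun j _ => sq_nonneg (ε i j))).1 hsq
      intro i hi j hj
      exact (Finset.sum_eq_zero_iff_of_nonneg (fun j _ => sq_nonneg (ε i j))).1
        (this i hi) j hj
    have := h1 i (Finset.mem_univ i) j (Finset.mem_univ j)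
    have hz : ε i j = 0 := by
      exact pow_eq_zero_iff (n := 2) (by norm_num) |>.1 this
    simpa [hε] using hz
  -- derive v = 0
  have hdiag : ∀ j, n j * v j = 0 := by
    intro j
    have := hvn j j
    nlinarith [hvn j j]
  have hvz : ∀ i, v i = 0 := by
    intro i
    calc v i = (∑ j, (n j) ^ 2) * v i := by rw [hn, one_mul]
      _ = ∑ j, n j * (n j * v i) := by rw [Finset.sum_mul]; exact Finset.sum_congr rfl fun j _ => by ring
      _ = ∑ j, n j * (-(n i * v j)) := by
          refine Finset.sum_congr rfl fun j _ => ?_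
          have := hvn i j
          have h2 : n j * v i = -(n i * v j) := by linarith
          rw [h2]
      _ = -(n i * ∑ j, n j * v j) := by
          rw [Finset.mul_sum]
          rw [← Finset.sum_neg_distrib]
          exact Finset.sum_congr rfl fun j _ => by ring
      _ = 0 := by
          have : (∑ j, n j * v j) = 0 := Finset.sum_eq_zero fun j _ => hdiag j
          rw [this]
          ring
  exact hv0 (funext hvz)


lemma nPhi_lVec_apply (p : ℝ × ℝ) (φ : ℝ) (j : Fin 3) :
    nPhi (lVec p) φ j = -Real.sin φ * ((Real.sqrt (1 - p.1 ^ 2))⁻¹ *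
        (![1 - p.1 ^ 2, -p.1 * p.2, -p.1 * Real.sqrt (1 - p.1 ^ 2 - p.2 ^ 2)] j)) +
      Real.cos φ * ((Real.sqrt (1 - p.1 ^ 2))⁻¹ *
        (![0, Real.sqrt (1 - p.1 ^ 2 - p.2 ^ 2), -p.2] j)) := by
  fin_cases j <;>
    simp [nPhi, mZero, nZero, lVec, WithLp.equiv_symm_apply, PiLp.toLp_apply]

lemma mPhi_lVec_apply (p : ℝ × ℝ) (φ : ℝ) (j : Fin 3) :
    mPhi (lVec p) φ j = Real.cos φ * ((Real.sqrt (1 - p.1 ^ 2))⁻¹ *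
        (![1 - p.1 ^ 2, -p.1 * p.2, -p.1 * Real.sqrt (1 - p.1 ^ 2 - p.2 ^ 2)] j)) +
      Real.sin φ * ((Real.sqrt (1 - p.1 ^ 2))⁻¹ *
        (![0, Real.sqrt (1 - p.1 ^ 2 - p.2 ^ 2), -p.2] j)) := by
  fin_cases j <;>
    simp [mPhi, mZero, nZero, lVec, WithLp.equiv_symm_apply, PiLp.toLp_apply]

section atoms
variable {p₀ : ℝ × ℝ} {φ : ℝ} (hp : p₀.1 ^ 2 + p₀.2 ^ 2 < 1)

lemma h_x1 : AnalyticAt ℝ (fun q : (ℝ × ℝ) × ℝ => q.1.1) (p₀, φ) :=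
  analyticAt_fst.comp analyticAt_fst

lemma h_x2 : AnalyticAt ℝ (fun q : (ℝ × ℝ) × ℝ => q.1.2) (p₀, φ) :=
  analyticAt_snd.comp analyticAt_fst

lemma h_sq1_pos (hp : p₀.1 ^ 2 + p₀.2 ^ 2 < 1) : (0:ℝ) < 1 - p₀.1 ^ 2 := by
  nlinarith [sq_nonneg p₀.2]

lemma h_u (hp : p₀.1 ^ 2 + p₀.2 ^ 2 < 1) :
    AnalyticAt ℝ (fun q : (ℝ × ℝ) × ℝ => Real.sqrt (1 - q.1.1 ^ 2)) (p₀, φ) := by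
  have hin : AnalyticAt ℝ (fun q : (ℝ × ℝ) × ℝ => 1 - q.1.1 ^ 2) (p₀, φ) :=
    analyticAt_const.sub ((h_x1).pow 2)
  exact AnalyticAt.comp (g := Real.sqrt) (f := fun q : (ℝ × ℝ) × ℝ => 1 - q.1.1 ^ 2) (analyticAt_rsqrt (h_sq1_pos hp)) hin

lemma h_uinv (hp : p₀.1 ^ 2 + p₀.2 ^ 2 < 1) :
    AnalyticAt ℝ (fun q : (ℝ × ℝ) × ℝ => (Real.sqrt (1 - q.1.1 ^ 2))⁻¹) (p₀, φ) :=
  (h_u hp).inv (ne_of_gt (Real.sqrt_pos.2 (h_sq1_pos hp)))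

lemma h_s (hp : p₀.1 ^ 2 + p₀.2 ^ 2 < 1) :
    AnalyticAt ℝ (fun q : (ℝ × ℝ) × ℝ => Real.sqrt (1 - q.1.1 ^ 2 - q.1.2 ^ 2)) (p₀, φ) := by
  have hin : AnalyticAt ℝ (fun q : (ℝ × ℝ) × ℝ => 1 - q.1.1 ^ 2 - q.1.2 ^ 2) (p₀, φ) :=
    (analyticAt_const.sub ((h_x1).pow 2)).sub ((h_x2).pow 2)
  exact AnalyticAt.comp (g := Real.sqrt) (f := fun q : (ℝ × ℝ) × ℝ => 1 - q.1.1 ^ 2 - q.1.2 ^ 2) (analyticAt_rsqrt (by nlinarith : (0:ℝ) < 1 - p₀.1 ^ 2 - p₀.2 ^ 2)) hin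

lemma h_cos : AnalyticAt ℝ (fun q : (ℝ × ℝ) × ℝ => Real.cos q.2) (p₀, φ) :=
  AnalyticAt.comp (g := Real.cos) (f := fun q : (ℝ × ℝ) × ℝ => q.2) (analyticAt_rcos φ) analyticAt_snd

lemma h_sin : AnalyticAt ℝ (fun q : (ℝ × ℝ) × ℝ => Real.sin q.2) (p₀, φ) :=
  AnalyticAt.comp (g := Real.sin) (f := fun q : (ℝ × ℝ) × ℝ => q.2) (analyticAt_rsin φ) analyticAt_snd

lemma h_nPhi (hp : p₀.1 ^ 2 + p₀.2 ^ 2 < 1) (j : Fin 3) :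
    AnalyticAt ℝ (fun q : (ℝ × ℝ) × ℝ => nPhi (lVec q.1) q.2 j) (p₀, φ) := by
  simp only [nPhi_lVec_apply]
  fin_cases j <;>
    simp only [Matrix.cons_val_zero, Matrix.cons_val_one, Matrix.head_cons,
      Matrix.cons_val_two, Matrix.tail_cons, Fin.isValue] <;>
  · apply AnalyticAt.add
    · exact (h_sin.neg).mul ((h_uinv hp).mul (by
        first
          | exact analyticAt_const.sub (h_x1.pow 2)
          | exact (h_x1.neg).mul h_x2
          | exact (h_x1.neg).mul (h_s hp)
          | exact analyticAt_const
          | exact h_s hp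
          | exact h_x2.neg))
    · exact h_cos.mul ((h_uinv hp).mul (by
        first
          | exact analyticAt_const.sub (h_x1.pow 2)
          | exact (h_x1.neg).mul h_x2
          | exact (h_x1.neg).mul (h_s hp)
          | exact analyticAt_const
          | exact h_s hp
          | exact h_x2.neg))

lemma h_mPhi (hp : p₀.1 ^ 2 + p₀.2 ^ 2 < 1) (j : Fin 3) :
    AnalyticAt ℝ (fun q : (ℝ × ℝ) × ℝ => mPhi (lVec q.1) q.2 j) (p₀, φ) := by
  simp only [mPhi_lVec_apply]
  fin_cases j <;>
    simp only [Matrix.cons_val_zero, Matrix.cons_val_one, Matrix.head_cons,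
      Matrix.cons_val_two, Matrix.tail_cons, Fin.isValue] <;>
  · apply AnalyticAt.add
    · exact h_cos.mul ((h_uinv hp).mul (by
        first
          | exact analyticAt_const.sub (h_x1.pow 2)
          | exact (h_x1.neg).mul h_x2
          | exact (h_x1.neg).mul (h_s hp)
          | exact analyticAt_const
          | exact h_s hp
          | exact h_x2.neg))
    · exact h_sin.mul ((h_uinv hp).mul (by
        first
          | exact analyticAt_const.sub (h_x1.pow 2)
          | exact (h_x1.neg).mul h_x2
          | exact (h_x1.neg).mul (h_s hp)
          | exact analyticAt_const
          | exact h_s hp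
          | exact h_x2.neg))

end atoms

section entries
variable {p₀ : ℝ × ℝ} {φ : ℝ} (C : Fin 3 → Fin 3 → Fin 3 → Fin 3 → ℝ)

lemma h_T (hp : p₀.1 ^ 2 + p₀.2 ^ 2 < 1) (i k : Fin 3) :
    AnalyticAt ℝ (fun q : (ℝ × ℝ) × ℝ => acousticT C (nPhi (lVec q.1) q.2) i k) (p₀, φ) := by
  simp only [acousticT, Matrix.of_apply]
  exact Finset.analyticAt_fun_sum _ fun j _ => Finset.analyticAt_fun_sum _ fun l _ =>
    (analyticAt_const.mul (h_nPhi hp j)).mul (h_nPhi hp l)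

lemma h_R (hp : p₀.1 ^ 2 + p₀.2 ^ 2 < 1) (i k : Fin 3) :
    AnalyticAt ℝ
      (fun q : (ℝ × ℝ) × ℝ => matR C (mPhi (lVec q.1) q.2) (nPhi (lVec q.1) q.2) i k) (p₀, φ) := by
  simp only [matR, Matrix.of_apply]
  exact Finset.analyticAt_fun_sum _ fun j _ => Finset.analyticAt_fun_sum _ fun l _ =>
    (analyticAt_const.mul (h_mPhi hp j)).mul (h_nPhi hp l)

lemma h_det (hp : p₀.1 ^ 2 + p₀.2 ^ 2 < 1) :
    AnalyticAt ℝ (fun q : (ℝ × ℝ) × ℝ => (acousticT C (nPhi (lVec q.1) q.2)).det) (p₀, φ) := by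
  simp only [Matrix.det_fin_three]
  repeat'
    first
      | exact h_T C hp _ _
      | apply AnalyticAt.sub
      | apply AnalyticAt.add
      | apply AnalyticAt.mul

lemma h_adj (hp : p₀.1 ^ 2 + p₀.2 ^ 2 < 1) (i k : Fin 3) :
    AnalyticAt ℝ
      (fun q : (ℝ × ℝ) × ℝ => (acousticT C (nPhi (lVec q.1) q.2)).adjugate i k) (p₀, φ) := by
  fin_cases i <;> fin_cases k <;>
    simp only [Matrix.adjugate_fin_three, Matrix.cons_val_zero, Matrix.cons_val_one,
      Matrix.head_cons, Matrix.cons_val_two, Matrix.tail_cons, Matrix.cons_val', Matrix.head_fin_const,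
      Matrix.empty_val', Matrix.cons_val_fin_one, Fin.isValue] <;>
  repeat'
    first
      | exact h_T C hp _ _
      | apply AnalyticAt.sub
      | apply AnalyticAt.add
      | apply AnalyticAt.mul
      | apply AnalyticAt.neg

end entries

lemma nPhi_sq_sum (p₀ : ℝ × ℝ) (φ : ℝ) (hp : p₀.1 ^ 2 + p₀.2 ^ 2 < 1) :
    ∑ j, (nPhi (lVec p₀) φ j) ^ 2 = 1 := by
  have hupos : (0:ℝ) < 1 - p₀.1 ^ 2 := by nlinarith [sq_nonneg p₀.2]
  set u : ℝ := Real.sqrt (1 - p₀.1 ^ 2) with hu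
  set s : ℝ := Real.sqrt (1 - p₀.1 ^ 2 - p₀.2 ^ 2) with hs
  have hu2 : u ^ 2 = 1 - p₀.1 ^ 2 := Real.sq_sqrt hupos.le
  have hs2 : s ^ 2 = 1 - p₀.1 ^ 2 - p₀.2 ^ 2 := Real.sq_sqrt (by nlinarith)
  have hu0 : u ≠ 0 := ne_of_gt (Real.sqrt_pos.2 hupos)
  have hsu : s ^ 2 = u ^ 2 - p₀.2 ^ 2 := by rw [hs2, hu2]; try ring
  have hpy : Real.sin φ ^ 2 + Real.cos φ ^ 2 = 1 := Real.sin_sq_add_cos_sq φ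
  rw [Fin.sum_univ_three]
  simp only [nPhi_lVec_apply, Matrix.cons_val_zero, Matrix.cons_val_one, Matrix.head_cons,
    Matrix.cons_val_two, Matrix.tail_cons, ← hu, ← hs]
  have expand :
      (-Real.sin φ * (u⁻¹ * (1 - p₀.1 ^ 2)) + Real.cos φ * (u⁻¹ * 0)) ^ 2 +
        (-Real.sin φ * (u⁻¹ * (-p₀.1 * p₀.2)) + Real.cos φ * (u⁻¹ * s)) ^ 2 +
        (-Real.sin φ * (u⁻¹ * (-p₀.1 * s)) + Real.cos φ * (u⁻¹ * -p₀.2)) ^ 2 =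
      u⁻¹ ^ 2 * ((Real.sin φ * (1 - p₀.1 ^ 2)) ^ 2 +
        (Real.sin φ * (p₀.1 * p₀.2) + Real.cos φ * s) ^ 2 +
        (Real.sin φ * (p₀.1 * s) - Real.cos φ * p₀.2) ^ 2) := by ring
  rw [expand]
  have hFval : (Real.sin φ * (1 - p₀.1 ^ 2)) ^ 2 +
      (Real.sin φ * (p₀.1 * p₀.2) + Real.cos φ * s) ^ 2 +
      (Real.sin φ * (p₀.1 * s) - Real.cos φ * p₀.2) ^ 2 = u ^ 2 := by
    have hsub : (1 - p₀.1 ^ 2) = u ^ 2 := hu2.symm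
    rw [hsub]
    linear_combination (Real.cos φ ^ 2 + Real.sin φ ^ 2 * p₀.1 ^ 2) * hsu +
      (Real.sin φ ^ 2 * u ^ 2) * hu2 + u ^ 2 * hpy
  rw [hFval]
  field_simp

section inv
variable {p₀ : ℝ × ℝ} {φ : ℝ} (C : Fin 3 → Fin 3 → Fin 3 → Fin 3 → ℝ)

lemma h_Tinv (hsym1 : ∀ i j k l, C i j k l = C i j l k)
    (hsym2 : ∀ i j k l, C i j k l = C k l i j)
    (hconv : ∃ lam : ℝ, 0 < lam ∧ ∀ ε : Matrix (Fin 3) (Fin 3) ℝ, ε.IsSymm →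
      lam * ∑ i, ∑ j, (ε i j) ^ 2 ≤ ∑ i, ∑ j, ∑ k, ∑ l, C i j k l * ε i j * ε k l)
    (hp : p₀.1 ^ 2 + p₀.2 ^ 2 < 1) (i k : Fin 3) :
    AnalyticAt ℝ (fun q : (ℝ × ℝ) × ℝ => (acousticT C (nPhi (lVec q.1) q.2))⁻¹ i k) (p₀, φ) := by
  have hrw : (fun q : (ℝ × ℝ) × ℝ => (acousticT C (nPhi (lVec q.1) q.2))⁻¹ i k) =
      fun q : (ℝ × ℝ) × ℝ => ((acousticT C (nPhi (lVec q.1) q.2)).det)⁻¹ *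
        (acousticT C (nPhi (lVec q.1) q.2)).adjugate i k := by
    funext q
    rw [Matrix.inv_def, Ring.inverse_eq_inv', Matrix.smul_apply, smul_eq_mul]
  rw [hrw]
  exact ((h_det C hp).inv
    (acousticT_det_ne_zero C hsym1 hsym2 hconv _ (nPhi_sq_sum p₀ φ hp))).mul (h_adj C hp i k)

lemma h_g1 (hsym1 : ∀ i j k l, C i j k l = C i j l k)
    (hsym2 : ∀ i j k l, C i j k l = C k l i j)
    (hconv : ∃ lam : ℝ, 0 < lam ∧ ∀ ε : Matrix (Fin 3) (Fin 3) ℝ, ε.IsSymm →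
      lam * ∑ i, ∑ j, (ε i j) ^ 2 ≤ ∑ i, ∑ j, ∑ k, ∑ l, C i j k l * ε i j * ε k l)
    (hp : p₀.1 ^ 2 + p₀.2 ^ 2 < 1) (i k : Fin 3) :
    AnalyticAt ℝ (fun q : (ℝ × ℝ) × ℝ =>
      ((acousticT C (nPhi (lVec q.1) q.2))⁻¹ *
        (matR C (mPhi (lVec q.1) q.2) (nPhi (lVec q.1) q.2)).transpose) i k) (p₀, φ) := by
  simp only [Matrix.mul_apply, Matrix.transpose_apply]
  exact Finset.analyticAt_fun_sum _ fun j _ =>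
    (h_Tinv C hsym1 hsym2 hconv hp i j).mul (h_R C hp k j)

end inv

theorem SOne_STwo_analytic
    (C : Fin 3 → Fin 3 → Fin 3 → Fin 3 → ℝ)
    (hsym1 : ∀ i j k l, C i j k l = C i j l k)
    (hsym2 : ∀ i j k l, C i j k l = C k l i j)
    (hconv : ∃ lam : ℝ, 0 < lam ∧ ∀ ε : Matrix (Fin 3) (Fin 3) ℝ, ε.IsSymm →
      lam * ∑ i, ∑ j, (ε i j) ^ 2 ≤ ∑ i, ∑ j, ∑ k, ∑ l, C i j k l * ε i j * ε k l) :
    ∀ i k : Fin 3,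
      AnalyticOnNhd ℝ (fun p : ℝ × ℝ => SOne C (lVec p) i k)
          {p : ℝ × ℝ | p.1 ^ 2 + p.2 ^ 2 < 1} ∧
        AnalyticOnNhd ℝ (fun p : ℝ × ℝ => STwo C (lVec p) i k)
          {p : ℝ × ℝ | p.1 ^ 2 + p.2 ^ 2 < 1} := by
  intro i k
  constructor
  · intro p₀ hp₀
    have hp : p₀.1 ^ 2 + p₀.2 ^ 2 < 1 := hp₀
    have heq : (fun p : ℝ × ℝ => SOne C (lVec p) i k) =
        fun p : ℝ × ℝ => -(2 * Real.pi)⁻¹ * ∫ φ in (0:ℝ)..(2 * Real.pi),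
          (fun q : (ℝ × ℝ) × ℝ => ((acousticT C (nPhi (lVec q.1) q.2))⁻¹ *
            (matR C (mPhi (lVec q.1) q.2) (nPhi (lVec q.1) q.2)).transpose) i k) (p, φ) := by
      funext p
      simp only [SOne, Matrix.of_apply]
    rw [heq]
    exact analyticAt_const.mul
      (analyticAt_intervalIntegral (fun t => h_g1 C hsym1 hsym2 hconv hp i k))
  · intro p₀ hp₀
    have hp : p₀.1 ^ 2 + p₀.2 ^ 2 < 1 := hp₀
    have heq : (fun p : ℝ × ℝ => STwo C (lVec p) i k) =
        fun p : ℝ × ℝ => (2 * Real.pi)⁻¹ * ∫ φ in (0:ℝ)..(2 * Real.pi),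
          (fun q : (ℝ × ℝ) × ℝ => (acousticT C (nPhi (lVec q.1) q.2))⁻¹ i k) (p, φ) := by
      funext p
      simp only [STwo, Matrix.of_apply]
    rw [heq]
    exact analyticAt_const.mul
      (analyticAt_intervalIntegral (fun t => h_Tinv C hsym1 hsym2 hconv hp i k))
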